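/- In type A_n, with c = s_{α_n} ⋯ s_{α_1}, for every r = 1, …, n the power c^r is the minimal-length coset representative w_{α_r} of the longest element w₀ with respect to the maximal parabolic subgroup omitting the reflection s_{α_r}; equivalently c^r has the same inversion set as w_{α_r}: R⁺(c^r) = R⁺(w_{α_r}). -/

import Mathlib

open scoped Classical
open Finset

noncomputable section

/-- The `i`-th standard basis vector of `ℝ^{n+1}`. -/
def e (n : ℕ) (i : Fin (n + 1)) : Fin (n + 1) → ℝ := fun k => if k = i then 1 else 0

/-- The simple root `α_{j+1} = e_j - e_{j+1}` of the root system of type `A_n`. -/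
def aroot (n : ℕ) (j : Fin n) : Fin (n + 1) → ℝ := e n j.castSucc - e n j.succ

/-- The simple reflection `s_{α_{j+1}}`, the transposition `(j, j+1)`. -/
def sA (n : ℕ) (j : Fin n) : Equiv.Perm (Fin (n + 1)) := Equiv.swap j.castSucc j.succ

/-- The action of the Weyl group (the symmetric group) on weights, by permuting
coordinates. -/
def permAct (n : ℕ) (σ : Equiv.Perm (Fin (n + 1))) (v : Fin (n + 1) → ℝ) :
    Fin (n + 1) → ℝ := fun i => v (σ⁻¹ i)

/-- The Coxeter element `c = s_{α_n} s_{α_{n-1}} ⋯ s_{α_1}`. -/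
def cox (n : ℕ) : Equiv.Perm (Fin (n + 1)) :=
  (List.ofFn fun j : Fin n => sA n j).reverse.prod

/-- The positive roots of type `A_n`: the vectors `e_i - e_j` with `i < j`. -/
def posA (n : ℕ) : Set (Fin (n + 1) → ℝ) :=
  {v | ∃ i j : Fin (n + 1), i < j ∧ v = e n i - e n j}

/-- The simple root `α_{r+1}` occurs in the support of `v`, i.e. `v ≥ α_{r+1}`. -/
def supportsA (n : ℕ) (v : Fin (n + 1) → ℝ) (r : Fin n) : Prop :=
  ∃ c : Fin n → ℕ, v = ∑ j : Fin n, (c j : ℝ) • aroot n j ∧ 1 ≤ c r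

end

/-- Length of a permutation, as its number of inversions. -/
def invCount (n : ℕ) (σ : Equiv.Perm (Fin (n + 1))) : ℕ :=
  ((univ : Finset (Fin (n + 1) × Fin (n + 1))).filter fun p =>
    p.1 < p.2 ∧ σ p.2 < σ p.1).card

/-- The maximal parabolic subgroup of the Weyl group generated by all simple reflections
other than `s_{α_{r+1}}`. -/
def WQ (n : ℕ) (r : Fin n) : Subgroup (Equiv.Perm (Fin (n + 1))) :=
  Subgroup.closure {σ | ∃ j : Fin n, j ≠ r ∧ σ = sA n j}

namespace Stmt8

lemma sA_val (n : ℕ) (j : Fin n) (x : Fin (n+1)) :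
    ((sA n j) x).val = if x.val = j.val then j.val + 1
      else if x.val = j.val + 1 then j.val else x.val := by
  rw [sA, Equiv.swap_apply_def]
  have h1 : (x = j.castSucc) ↔ x.val = j.val := by
    rw [Fin.ext_iff]; simp
  have h2 : (x = j.succ) ↔ x.val = j.val + 1 := by
    rw [Fin.ext_iff]; simp
  split_ifs with a b <;> simp_all

lemma cox_take (n m : ℕ) (hm : m ≤ n) (x : Fin (n+1)) :
    ((((List.ofFn fun j : Fin n => sA n j).take m).reverse.prod) x).val =
      if x.val = 0 then m else if x.val ≤ m then x.val - 1 else x.val := by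
  induction m with
  | zero =>
      simp only [List.take_zero, List.reverse_nil, List.prod_nil, Equiv.Perm.one_apply]
      split_ifs <;> omega
  | succ m ih =>
      have hm' : m ≤ n := by omega
      have hlen : m < (List.ofFn fun j : Fin n => sA n j).length := by
        simp; omega
      have hget : (List.ofFn fun j : Fin n => sA n j)[m]? =
          some (sA n ⟨m, by omega⟩) := by
        rw [List.getElem?_eq_getElem hlen, List.getElem_ofFn]
      rw [List.take_succ, hget]
      simp only [Option.toList_some, List.reverse_append, List.reverse_singleton,
        List.prod_cons, List.singleton_append]
      rw [Equiv.Perm.mul_apply]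
      rw [sA_val]
      rw [ih hm']
      simp only [Fin.val_mk]
      have hx := x.isLt
      split_ifs <;> omega

lemma cox_apply (n : ℕ) (x : Fin (n+1)) :
    ((cox n) x).val = if x.val = 0 then n else x.val - 1 := by
  have h := cox_take n n le_rfl x
  rw [List.take_of_length_le (by simp)] at h
  have hx := x.isLt
  rw [cox, h]
  split_ifs <;> omega

lemma cox_pow_apply (n k : ℕ) (hk : k ≤ n + 1) (x : Fin (n+1)) :
    (((cox n) ^ k) x).val = (x.val + (n + 1) - k) % (n + 1) := by
  induction k with
  | zero =>
      simp only [pow_zero, Equiv.Perm.one_apply, Nat.sub_zero]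
      rw [Nat.add_mod_right, Nat.mod_eq_of_lt x.isLt]
  | succ k ih =>
      have hk' : k ≤ n + 1 := by omega
      rw [pow_succ', Equiv.Perm.mul_apply, cox_apply, ih hk']
      have hx : x.val < n + 1 := x.isLt
      set a := x.val + (n + 1) - k with ha
      have ha1 : 1 ≤ a := by omega
      have ha2 : a < 2 * (n + 1) := by omega
      have hmod : ∀ b : ℕ, b < 2 * (n+1) →
          b % (n+1) = if b < n+1 then b else b - (n+1) := by
        intro b hb
        split_ifs with h
        · exact Nat.mod_eq_of_lt h
        · rw [Nat.mod_eq_sub_mod (by omega), Nat.mod_eq_of_lt (by omega)]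
      rw [hmod a ha2]
      have : x.val + (n+1) - (k+1) = a - 1 := by omega
      rw [this, hmod (a-1) (by omega)]
      split_ifs <;> omega


/-- The subgroup of permutations preserving the block `{x : x.val ≤ r}`. -/
def Bsub (n : ℕ) (r : Fin n) : Subgroup (Equiv.Perm (Fin (n+1))) where
  carrier := {σ | ∀ x : Fin (n+1), ((σ x).val ≤ r.val ↔ x.val ≤ r.val)}
  one_mem' := by intro x; simp
  mul_mem' := by
    intro a b ha hb x
    rw [Equiv.Perm.mul_apply, ha, hb]
  inv_mem' := by
    intro a ha x
    have := ha (a⁻¹ x)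
    rw [← Equiv.Perm.mul_apply, mul_inv_cancel, Equiv.Perm.one_apply] at this
    exact this.symm

lemma sA_mem_B (n : ℕ) (r j : Fin n) (hj : j ≠ r) : sA n j ∈ Bsub n r := by
  intro x
  have hj' : j.val ≠ r.val := fun he => hj (Fin.ext he)
  have h := sA_val n j x
  have hx := x.isLt
  have hjlt := j.isLt
  rw [h]
  split_ifs <;> omega

lemma WQ_le_B (n : ℕ) (r : Fin n) : WQ n r ≤ Bsub n r := by
  rw [WQ, Subgroup.closure_le]
  rintro σ ⟨j, hj, rfl⟩
  exact sA_mem_B n r j hj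

lemma descent_of_ne_one (n : ℕ) (σ : Equiv.Perm (Fin (n+1))) (h : σ ≠ 1) :
    ∃ j : Fin n, σ j.succ < σ j.castSucc := by
  by_contra hc
  push_neg at hc
  have hmono : StrictMono σ := by
    rw [Fin.strictMono_iff_lt_succ]
    intro j
    rcases lt_or_eq_of_le (hc j) with h' | h'
    · exact h'
    · exact absurd (σ.injective h') (by simp [Fin.ext_iff])
  have : (σ : Fin (n+1) → Fin (n+1)) = id := by
    apply (hmono.range_inj strictMono_id).1
    rw [Set.range_id, Set.range_eq_univ.2 σ.surjective]
  exact h (Equiv.ext fun x => congrFun this x)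

lemma swap_pair_in_invset (n : ℕ) (σ : Equiv.Perm (Fin (n+1))) (j : Fin n)
    (h : σ j.succ < σ j.castSucc) :
    (j.castSucc, j.succ) ∈ ((univ : Finset (Fin (n + 1) × Fin (n + 1))).filter fun p =>
      p.1 < p.2 ∧ σ p.2 < σ p.1) := by
  simp only [mem_filter, mem_univ, true_and]
  exact ⟨by rw [Fin.lt_def]; simp, h⟩

lemma invCount_mul_sA_lt (n : ℕ) (σ : Equiv.Perm (Fin (n+1))) (j : Fin n)
    (h : σ j.succ < σ j.castSucc) :
    invCount n (σ * sA n j) < invCount n σ := by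
  classical
  set s := sA n j with hs
  set F := ((univ : Finset (Fin (n + 1) × Fin (n + 1))).filter fun p =>
      p.1 < p.2 ∧ (σ * s) p.2 < (σ * s) p.1) with hF
  set G := ((univ : Finset (Fin (n + 1) × Fin (n + 1))).filter fun p =>
      p.1 < p.2 ∧ σ p.2 < σ p.1) with hG
  have hab : (j.castSucc, j.succ) ∈ G := swap_pair_in_invset n σ j h
  have hsv : ∀ x : Fin (n+1), (s x).val = if x.val = j.val then j.val + 1
      else if x.val = j.val + 1 then j.val else x.val := sA_val n j
  -- the map p ↦ (s p.1, s p.2) sends F into G.erase (castSucc j, succ j)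
  have hmaps : ∀ p ∈ F, (s p.1, s p.2) ∈ G.erase (j.castSucc, j.succ) := by
    rintro ⟨x, y⟩ hp
    simp only [hF, mem_filter, mem_univ, true_and] at hp
    obtain ⟨hxy, hinv⟩ := hp
    rw [Fin.lt_def] at hxy
    rw [Equiv.Perm.mul_apply, Equiv.Perm.mul_apply] at hinv
    -- p ≠ (castSucc j, succ j)
    have hpne : ¬ (x.val = j.val ∧ y.val = j.val + 1) := by
      rintro ⟨hx, hy⟩
      have hx' : x = j.castSucc := by rw [Fin.ext_iff]; simpa using hx
      have hy' : y = j.succ := by rw [Fin.ext_iff]; simpa using hy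
      rw [hx', hy'] at hinv
      -- s (castSucc j) = succ j, s (succ j) = castSucc j
      have e1 : s j.castSucc = j.succ := Equiv.swap_apply_left _ _
      have e2 : s j.succ = j.castSucc := Equiv.swap_apply_right _ _
      rw [e1, e2] at hinv
      exact absurd hinv (not_lt.2 (le_of_lt h))
    have hsx := hsv x
    have hsy := hsv y
    have hpne' : x.val ≠ j.val ∨ y.val ≠ j.val + 1 := by tauto
    have hlt : (s x).val < (s y).val := by
      rw [hsx, hsy]
      have hxlt := x.isLt
      have hylt := y.isLt
      have hjlt := j.isLt
      split_ifs <;> omega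
    have hne : (s x, s y) ≠ (j.castSucc, j.succ) := by
      intro he
      rw [Prod.ext_iff] at he
      obtain ⟨e1, e2⟩ := he
      rw [Fin.ext_iff] at e1 e2
      rw [hsx] at e1
      rw [hsy] at e2
      simp only [Fin.coe_castSucc, Fin.val_succ] at e1 e2
      split_ifs at e1 e2 <;> omega
    rw [mem_erase]
    refine ⟨hne, ?_⟩
    simp only [hG, mem_filter, mem_univ, true_and]
    exact ⟨by rw [Fin.lt_def]; exact hlt, hinv⟩
  have hinj : ∀ p ∈ F, ∀ q ∈ F, (s p.1, s p.2) = (s q.1, s q.2) → p = q := by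
    rintro ⟨a, b⟩ _ ⟨c, d⟩ _ he
    rw [Prod.ext_iff] at he
    obtain ⟨e1, e2⟩ := he
    exact Prod.ext (s.injective e1) (s.injective e2)
  have hcard : F.card ≤ (G.erase (j.castSucc, j.succ)).card :=
    Finset.card_le_card_of_injOn _ hmaps hinj
  have : (G.erase (j.castSucc, j.succ)).card < G.card :=
    Finset.card_erase_lt_of_mem hab
  calc invCount n (σ * s) = F.card := rfl
    _ ≤ _ := hcard
    _ < G.card := this

lemma mem_WQ_of_mem_B (n : ℕ) (r : Fin n) :
    ∀ N (σ : Equiv.Perm (Fin (n+1))), invCount n σ < N → σ ∈ Bsub n r → σ ∈ WQ n r := by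
  intro N
  induction N with
  | zero => intro σ h; omega
  | succ N ih =>
      intro σ hN hB
      by_cases h1 : σ = 1
      · rw [h1]; exact (WQ n r).one_mem
      · obtain ⟨j, hj⟩ := descent_of_ne_one n σ h1
        -- j ≠ r
        have hjr : j ≠ r := by
          intro he
          subst he
          have h1' := (hB j.castSucc).2 (by simp)
          have h2' := hB j.succ
          have h3' : ¬ (j.succ.val ≤ j.val) := by simp
          rw [Fin.lt_def] at hj
          have hx := (σ j.succ).isLt
          simp only [Fin.val_succ] at h2' h3'
          have : ¬ ((σ j.succ).val ≤ j.val) := fun hh => h3' (h2'.1 hh)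
          omega
        have hsmem : sA n j ∈ WQ n r :=
          Subgroup.subset_closure ⟨j, hjr, rfl⟩
        have hlt := invCount_mul_sA_lt n σ j hj
        have hB' : σ * sA n j ∈ Bsub n r := by
          exact (Bsub n r).mul_mem hB (sA_mem_B n r j hjr)
        have hmem : σ * sA n j ∈ WQ n r := ih _ (by omega) hB'
        have : σ = (σ * sA n j) * sA n j := by
          rw [mul_assoc, sA, Equiv.swap_mul_self, mul_one]
        rw [this]
        exact (WQ n r).mul_mem hmem hsmem


lemma coxpow_val (n : ℕ) (r : Fin n) (x : Fin (n+1)) :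
    (((cox n) ^ ((r:ℕ)+1)) x).val =
      if x.val ≤ r.val then x.val + n - r.val else x.val - r.val - 1 := by
  have hr := r.isLt
  have hx := x.isLt
  rw [cox_pow_apply n ((r:ℕ)+1) (by omega) x]
  have h1 : x.val + (n+1) - ((r:ℕ)+1) = x.val + n - r.val := by omega
  rw [h1]
  split_ifs with h
  · exact Nat.mod_eq_of_lt (by omega)
  · rw [Nat.mod_eq_sub_mod (by omega), Nat.mod_eq_of_lt (by omega)]
    omega

end Stmt8

/-- `c^r` is the minimal-length representative of the coset `w₀ W_{Q_{α_r}}`,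
where `w₀` is the longest element (the order-reversing permutation). -/
theorem stmt_8 (n : ℕ) (r : Fin n) :
    (∃ u ∈ WQ n r, (cox n) ^ ((r : ℕ) + 1) = Fin.revPerm * u) ∧
    ∀ u ∈ WQ n r,
      invCount n ((cox n) ^ ((r : ℕ) + 1)) ≤ invCount n (Fin.revPerm * u) := by
  have hr := r.isLt
  set σc := (cox n) ^ ((r:ℕ)+1) with hσc
  have hF : ∀ x : Fin (n+1), (σc x).val =
      if x.val ≤ r.val then x.val + n - r.val else x.val - r.val - 1 := Stmt8.coxpow_val n r
  have hrev : ∀ y : Fin (n+1), (Fin.revPerm y).val = n - y.val := by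
    intro y; simp [Fin.val_rev]
  have hrev2 : (Fin.revPerm : Equiv.Perm (Fin (n+1))) * Fin.revPerm = 1 := by
    ext x; simp
  constructor
  · refine ⟨Fin.revPerm * σc, ?_, ?_⟩
    · apply Stmt8.mem_WQ_of_mem_B n r (invCount n (Fin.revPerm * σc) + 1) _ (by omega)
      intro x
      have hx := x.isLt
      rw [Equiv.Perm.mul_apply, hrev, hF]
      split_ifs <;> omega
    · rw [← mul_assoc, hrev2, one_mul]
  · intro u hu
    have hB := Stmt8.WQ_le_B n r hu
    have hT : ((univ : Finset (Fin (n + 1) × Fin (n + 1))).filter fun p =>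
        p.1 < p.2 ∧ σc p.2 < σc p.1) =
        ((univ : Finset (Fin (n + 1) × Fin (n + 1))).filter fun p =>
        p.1.val ≤ r.val ∧ r.val < p.2.val) := by
      ext p
      simp only [mem_filter, mem_univ, true_and, Fin.lt_def]
      have hx := p.1.isLt
      have hy := p.2.isLt
      rw [hF p.1, hF p.2]
      constructor
      · rintro ⟨h1, h2⟩
        split_ifs at h2 <;> omega
      · rintro ⟨h1, h2⟩
        split_ifs at * <;> omega
    unfold invCount
    rw [hT]
    apply Finset.card_le_card
    intro p hp
    simp only [mem_filter, mem_univ, true_and] at hp ⊢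
    obtain ⟨h1, h2⟩ := hp
    have hu1 := hB p.1
    have hu2 := hB p.2
    have l1 := (u p.1).isLt
    have l2 := (u p.2).isLt
    have k1 : (u p.1).val ≤ r.val := hu1.2 h1
    have k2 : ¬ ((u p.2).val ≤ r.val) := fun hh => absurd (hu2.1 hh) (by omega)
    constructor
    · rw [Fin.lt_def]; omega
    · simp only [Equiv.Perm.mul_apply, Fin.lt_def]
      rw [hrev, hrev]
      omega
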